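/- Let T > 0 and let k : ℝ → ℝ be continuously differentiable on [0, T] with k(0) ≠ 0. If u : [0, T] → ℝ is continuous and ∫₀ᵗ k(t − s) u(s) ds = 0 for all t ∈ [0, T], then u(t) = 0 for all t ∈ [0, T]. -/

import Mathlib

open Set intervalIntegral MeasureTheory

/-- Injectivity of the Volterra convolution operator with a `C¹` kernel not vanishing at `0`:
if `u` is continuous on `[0,T]` and `∫₀ᵗ k(t-s) u(s) ds = 0` on `[0,T]`, then `u ≡ 0`. -/
theorem convolution_operator_injective
    (T : ℝ) (hT : 0 < T) (k k' : ℝ → ℝ)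
    (hk : ∀ t ∈ Set.Icc (0 : ℝ) T, HasDerivAt k (k' t) t)
    (hk' : ContinuousOn k' (Set.Icc 0 T))
    (hk0 : k 0 ≠ 0)
    (u : ℝ → ℝ) (hu : ContinuousOn u (Set.Icc 0 T))
    (heq : ∀ t ∈ Set.Icc (0 : ℝ) T, ∫ s in (0 : ℝ)..t, k (t - s) * u s = 0) :
    ∀ t ∈ Set.Icc (0 : ℝ) T, u t = 0 := by
  have h0T : (0:ℝ) ≤ T := hT.le
  -- continuous extension of `u` to all of `ℝ`
  set v : ℝ → ℝ := fun t => u (Set.projIcc 0 T h0T t) with hvdef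
  have hv : Continuous v :=
    hu.comp_continuous (continuous_subtype_val.comp continuous_projIcc)
      (fun x => (Set.projIcc 0 T h0T x).2)
  have hveq : ∀ s ∈ Set.Icc (0:ℝ) T, v s = u s := by
    intro s hs
    simp [hvdef, Set.projIcc_of_mem h0T hs]
  -- antiderivative
  set U : ℝ → ℝ := fun t => ∫ s in (0:ℝ)..t, v s with hUdef
  have hU : ∀ t : ℝ, HasDerivAt U (v t) t :=
    fun t => (hv.integral_hasStrictDerivAt 0 t).hasDerivAt
  have hUc : Continuous U := continuous_iff_continuousAt.2 fun t => (hU t).continuousAt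
  have hU0 : U 0 = 0 := by simp [hUdef]
  -- bound for k'
  obtain ⟨M, hM⟩ : ∃ M, ∀ x ∈ Set.Icc (0:ℝ) T, |k' x| ≤ M :=
    isCompact_Icc.exists_bound_of_continuousOn hk'
  have hM0 : 0 ≤ M := le_trans (abs_nonneg _) (hM 0 ⟨le_rfl, h0T⟩)
  -- key identity via integration by parts
  have key : ∀ t ∈ Set.Icc (0:ℝ) T,
      k 0 * U t + (∫ s in (0:ℝ)..t, k' (t - s) * U s) = 0 := by
    intro t ht
    have ht0 : (0:ℝ) ≤ t := ht.1
    have hsub : ∀ s ∈ Set.uIcc (0:ℝ) t, t - s ∈ Set.Icc (0:ℝ) T := by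
      intro s hs
      rw [Set.uIcc_of_le ht0] at hs
      exact ⟨by linarith [hs.2], by linarith [hs.1, ht.2]⟩
    have hder : ∀ s ∈ Set.uIcc (0:ℝ) t,
        HasDerivAt (fun s => k (t - s)) (-k' (t - s)) s := by
      intro s hs
      have h1 : HasDerivAt (fun x : ℝ => t - x) (-1) s := (hasDerivAt_id s).const_sub t
      have := (hk (t - s) (hsub s hs)).comp s h1
      simpa [Function.comp_def] using this
    have hUder : ∀ s ∈ Set.uIcc (0:ℝ) t, HasDerivAt U (v s) s := fun s _ => hU s
    have hint1 : IntervalIntegrable (fun s => -k' (t - s)) volume 0 t := by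
      apply ContinuousOn.intervalIntegrable
      apply ContinuousOn.neg
      apply hk'.comp (Continuous.continuousOn (by fun_prop))
      intro s hs; exact hsub s hs
    have hint2 : IntervalIntegrable v volume 0 t := hv.intervalIntegrable 0 t
    have ibp := intervalIntegral.integral_mul_deriv_eq_deriv_mul hder hUder hint1 hint2
    -- LHS equals 0 by hypothesis
    have hL : (∫ s in (0:ℝ)..t, k (t - s) * v s) = 0 := by
      rw [intervalIntegral.integral_congr (g := fun s => k (t - s) * u s)]
      · exact heq t ht
      · intro s hs
        rw [Set.uIcc_of_le ht0] at hs
        show k (t - s) * v s = k (t - s) * u s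
        rw [hveq s ⟨hs.1, le_trans hs.2 ht.2⟩]
    rw [hL, hU0] at ibp
    have : (0:ℝ) = k (t - t) * U t - ∫ s in (0:ℝ)..t, -k' (t - s) * U s := by
      simpa using ibp
    rw [sub_self] at this
    have : k 0 * U t = ∫ s in (0:ℝ)..t, -k' (t - s) * U s := by linarith [this]
    rw [this]
    rw [← intervalIntegral.integral_add]
    · rw [intervalIntegral.integral_congr (g := fun _ => (0:ℝ))]
      · simp
      · intro s _; ring
    · exact hint1.mul_continuousOn hUc.continuousOn
    · apply ContinuousOn.intervalIntegrable
      apply ContinuousOn.mul _ hUc.continuousOn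
      apply hk'.comp (Continuous.continuousOn (by fun_prop))
      intro s hs; exact hsub s hs
  -- Gronwall: bound |U t| by C * ∫₀ᵗ |U|
  set C : ℝ := M / |k 0| with hCdef
  have hC0 : 0 ≤ C := div_nonneg hM0 (abs_nonneg _)
  have hbound : ∀ t ∈ Set.Icc (0:ℝ) T, |U t| ≤ C * ∫ s in (0:ℝ)..t, |U s| := by
    intro t ht
    have ht0 : (0:ℝ) ≤ t := ht.1
    have hKU : k 0 * U t = -∫ s in (0:ℝ)..t, k' (t - s) * U s := by
      have := key t ht; linarith
    have h1 : |k 0| * |U t| = |∫ s in (0:ℝ)..t, k' (t - s) * U s| := by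
      rw [← abs_mul, hKU, abs_neg]
    have h2 : |∫ s in (0:ℝ)..t, k' (t - s) * U s| ≤ ∫ s in (0:ℝ)..t, M * |U s| := by
      refine le_trans (intervalIntegral.abs_integral_le_integral_abs ht0) ?_
      apply intervalIntegral.integral_mono_on ht0
      · apply ContinuousOn.intervalIntegrable
        apply ContinuousOn.abs
        apply ContinuousOn.mul _ hUc.continuousOn
        apply hk'.comp (Continuous.continuousOn (by fun_prop))
        intro s hs
        rw [Set.uIcc_of_le ht0] at hs
        exact ⟨by linarith [hs.2], by linarith [hs.1, ht.2]⟩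
      · exact ((continuous_const.mul hUc.abs).intervalIntegrable 0 t)
      · intro s hs
        rw [abs_mul]
        apply mul_le_mul_of_nonneg_right _ (abs_nonneg _)
        exact hM (t - s) ⟨by linarith [hs.2], by linarith [hs.1, ht.2]⟩
    have h3 : (∫ s in (0:ℝ)..t, M * |U s|) = M * ∫ s in (0:ℝ)..t, |U s| := by
      simp [intervalIntegral.integral_const_mul]
    have h4 : |k 0| * |U t| ≤ M * ∫ s in (0:ℝ)..t, |U s| := by
      rw [h1]; rw [h3] at h2; exact h2
    have hk0' : 0 < |k 0| := abs_pos.2 hk0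
    rw [hCdef, div_mul_eq_mul_div, le_div_iff₀ hk0']
    calc |U t| * |k 0| = |k 0| * |U t| := mul_comm _ _
      _ ≤ M * ∫ s in (0:ℝ)..t, |U s| := h4
  -- apply Gronwall to g t = ∫₀ᵗ |U|
  set g : ℝ → ℝ := fun t => ∫ s in (0:ℝ)..t, |U s| with hgdef
  have hg : ∀ t : ℝ, HasDerivAt g (|U t|) t :=
    fun t => ((hUc.abs).integral_hasStrictDerivAt 0 t).hasDerivAt
  have hgc : ContinuousOn g (Set.Icc 0 T) :=
    (continuous_iff_continuousAt.2 fun t => (hg t).continuousAt).continuousOn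
  have hgnonneg : ∀ t ∈ Set.Icc (0:ℝ) T, 0 ≤ g t := by
    intro t ht
    exact intervalIntegral.integral_nonneg ht.1 (fun s _ => abs_nonneg _)
  have hgron := norm_le_gronwallBound_of_norm_deriv_right_le (f := g) (f' := fun t => |U t|)
    (δ := 0) (K := C) (ε := 0) (a := 0) (b := T) hgc
    (fun x hx => (hg x).hasDerivWithinAt)
    (by simp [hgdef])
    (by
      intro x hx
      have hx' : x ∈ Set.Icc (0:ℝ) T := ⟨hx.1, hx.2.le⟩
      have := hbound x hx'
      rw [Real.norm_eq_abs, Real.norm_eq_abs, abs_abs,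
        abs_of_nonneg (hgnonneg x hx')]
      simpa using this)
  have hgzero : ∀ t ∈ Set.Icc (0:ℝ) T, g t = 0 := by
    intro t ht
    have := hgron t ht
    rw [gronwallBound_ε0, zero_mul, Real.norm_eq_abs,
      abs_of_nonneg (hgnonneg t ht)] at this
    exact le_antisymm this (hgnonneg t ht)
  have hUzero : ∀ t ∈ Set.Icc (0:ℝ) T, U t = 0 := by
    intro t ht
    have h1 := hbound t ht
    have h2 : (∫ s in (0:ℝ)..t, |U s|) = 0 := hgzero t ht
    rw [h2, mul_zero] at h1
    exact abs_eq_zero.1 (le_antisymm h1 (abs_nonneg _))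
  -- conclude u = 0 via uniqueness of derivative within Icc
  intro t ht
  have hUD : UniqueDiffWithinAt ℝ (Set.Icc (0:ℝ) T) t := (uniqueDiffOn_Icc hT) t ht
  have hd1 : HasDerivWithinAt U (v t) (Set.Icc (0:ℝ) T) t := (hU t).hasDerivWithinAt
  have hd2 : HasDerivWithinAt U 0 (Set.Icc (0:ℝ) T) t := by
    apply HasDerivWithinAt.congr (hasDerivWithinAt_const t _ (0:ℝ)) hUzero (hUzero t ht)
  have := hd1.derivWithin hUD
  rw [hd2.derivWithin hUD] at this
  rw [← hveq t ht, ← this]
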